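/- Let C, F > 0 and let η ∈ C²([0,T)), η > 0, satisfy η'' = −C η'/η³ − F on [0,T) with η(0) = η₀ > 0, η'(0) = η₁ ≤ 0, and η' < 0 on (0,T). Then for all t ∈ (0,T): (a) −√(η₁² + 2Fη₀) ≤ η'(t) < 0, and (b) η₀ [C / (C + 2η₀² F t − 2η₀² η₁)]^{1/2} ≤ η(t) ≤ η₀. -/
import Mathlib


open Set

theorem stmt15
    (T C F η₀ η₁ : ℝ) (hT : 0 < T) (hC : 0 < C) (hF : 0 < F)
    (hη₀ : 0 < η₀) (hη₁ : η₁ ≤ 0)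
    (η η' η'' : ℝ → ℝ)
    (hd1 : ∀ t ∈ Ico 0 T, HasDerivAt η (η' t) t)
    (hd2 : ∀ t ∈ Ico 0 T, HasDerivAt η' (η'' t) t)
    (hpos : ∀ t ∈ Ico 0 T, 0 < η t)
    (hode : ∀ t ∈ Ico 0 T, η'' t = -C * η' t / (η t) ^ 3 - F)
    (hinit : η 0 = η₀) (hinit' : η' 0 = η₁)
    (hneg : ∀ t ∈ Ioo 0 T, η' t < 0) :
    ∀ t ∈ Ioo 0 T,
      (-Real.sqrt (η₁ ^ 2 + 2 * F * η₀) ≤ η' t ∧ η' t < 0) ∧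
      (η₀ * Real.sqrt (C / (C + 2 * η₀ ^ 2 * F * t - 2 * η₀ ^ 2 * η₁)) ≤ η t ∧
        η t ≤ η₀) := by
  have hIoo : Ioo 0 T ⊆ Ico 0 T := Ioo_subset_Ico_self
  have h0mem : (0:ℝ) ∈ Ico 0 T := ⟨le_refl 0, hT⟩
  have hcont : ContinuousOn η (Ico 0 T) := fun x hx =>
    ((hd1 x hx).continuousAt).continuousWithinAt
  have hcont' : ContinuousOn η' (Ico 0 T) := fun x hx =>
    ((hd2 x hx).continuousAt).continuousWithinAt
  have hint : interior (Ico (0:ℝ) T) = Ioo 0 T := interior_Ico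
  -- η is antitone
  have hanti : AntitoneOn η (Ico 0 T) := by
    apply antitoneOn_of_deriv_nonpos (convex_Ico 0 T) hcont
    · intro x hx
      rw [hint] at hx
      exact ((hd1 x (hIoo hx)).differentiableAt).differentiableWithinAt
    · intro x hx
      rw [hint] at hx
      rw [(hd1 x (hIoo hx)).deriv]
      exact (hneg x hx).le
  -- energy E(t) = η'(t)^2/2 + F * η(t)
  have hEderiv : ∀ x ∈ Ico 0 T,
      HasDerivAt (fun t => (η' t) ^ 2 / 2 + F * η t)
        ((2 * η' x ^ 1 * η'' x) / 2 + F * η' x) x := by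
    intro x hx
    exact (((hd2 x hx).pow 2).div_const 2).add ((hd1 x hx).const_mul F)
  have hEanti : AntitoneOn (fun t => (η' t) ^ 2 / 2 + F * η t) (Ico 0 T) := by
    apply antitoneOn_of_deriv_nonpos (convex_Ico 0 T)
    · exact fun x hx => ((hEderiv x hx).continuousAt).continuousWithinAt
    · intro x hx
      rw [hint] at hx
      exact ((hEderiv x (hIoo hx)).differentiableAt).differentiableWithinAt
    · intro x hx
      rw [hint] at hx
      rw [(hEderiv x (hIoo hx)).deriv]
      have hηx := hpos x (hIoo hx)
      rw [hode x (hIoo hx)]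
      have h1 : (2 * η' x ^ 1 * (-C * η' x / η x ^ 3 - F)) / 2 + F * η' x
          = -C * (η' x) ^ 2 / (η x) ^ 3 := by
        field_simp
        ring
      rw [h1]
      apply div_nonpos_of_nonpos_of_nonneg
      · nlinarith [sq_nonneg (η' x)]
      · positivity
  -- H(t) = η'(t) - C/2 * (η t ^ 2)⁻¹ + F * t
  have hHderiv : ∀ x ∈ Ico 0 T,
      HasDerivAt (fun t => η' t - C / 2 * ((η t) ^ 2)⁻¹ + F * t)
        (η'' x - C / 2 * (-(2 * η x ^ 1 * η' x) / ((η x) ^ 2) ^ 2) + F * 1) x := by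
    intro x hx
    have hne : η x ≠ 0 := (hpos x hx).ne'
    exact (((hd2 x hx)).sub ((((hd1 x hx).pow 2).inv (pow_ne_zero 2 hne)).const_mul
      (C / 2))).add ((hasDerivAt_id x).const_mul F)
  have hHmono : MonotoneOn (fun t => η' t - C / 2 * ((η t) ^ 2)⁻¹ + F * t) (Ico 0 T) := by
    apply monotoneOn_of_deriv_nonneg (convex_Ico 0 T)
    · exact fun x hx => ((hHderiv x hx).continuousAt).continuousWithinAt
    · intro x hx
      rw [hint] at hx
      exact ((hHderiv x (hIoo hx)).differentiableAt).differentiableWithinAt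
    · intro x hx
      rw [hint] at hx
      rw [(hHderiv x (hIoo hx)).deriv]
      have hηx := hpos x (hIoo hx)
      have hne : η x ≠ 0 := hηx.ne'
      rw [hode x (hIoo hx)]
      have : -C * η' x / η x ^ 3 - F - C / 2 * (-(2 * η x ^ 1 * η' x) / (η x ^ 2) ^ 2)
          + F * 1 = 0 := by
        field_simp
        ring
      rw [this]
  -- main
  intro t ht
  have htI : t ∈ Ico 0 T := hIoo ht
  have hηt : 0 < η t := hpos t htI
  have hη't : η' t < 0 := hneg t ht
  -- (a)
  have hE := hEanti h0mem htI ht.1.le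
  simp only [hinit, hinit'] at hE
  have hsq : (η' t) ^ 2 ≤ η₁ ^ 2 + 2 * F * η₀ := by nlinarith [mul_pos hF hηt]
  have habs : |η' t| ≤ Real.sqrt (η₁ ^ 2 + 2 * F * η₀) := Real.abs_le_sqrt hsq
  have ha : -Real.sqrt (η₁ ^ 2 + 2 * F * η₀) ≤ η' t := by
    have := neg_abs_le (η' t)
    linarith
  -- (b) upper
  have hub : η t ≤ η₀ := by
    have := hanti h0mem htI ht.1.le
    rwa [hinit] at this
  -- (b) lower
  set D := C + 2 * η₀ ^ 2 * F * t - 2 * η₀ ^ 2 * η₁ with hDdef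
  have hD : 0 < D := by nlinarith [mul_pos hF ht.1, sq_nonneg η₀]
  have hH := hHmono h0mem htI ht.1.le
  simp only [hinit, hinit', mul_zero] at hH
  have h1 : C / (2 * (η t) ^ 2) < C / (2 * η₀ ^ 2) + F * t - η₁ := by
    have e1 : C / 2 * (((η t) ^ 2)⁻¹) = C / (2 * (η t) ^ 2) := by ring
    have e2 : C / 2 * ((η₀ ^ 2)⁻¹) = C / (2 * η₀ ^ 2) := by ring
    rw [e1, e2] at hH
    linarith
  have h2 : C / (2 * η₀ ^ 2) + F * t - η₁ = D / (2 * η₀ ^ 2) := by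
    field_simp
    ring
  rw [h2, div_lt_div_iff₀ (by positivity) (by positivity)] at h1
  have key : C * η₀ ^ 2 / D ≤ (η t) ^ 2 := by
    rw [div_le_iff₀ hD]
    nlinarith
  have hlb : η₀ * Real.sqrt (C / D) ≤ η t := by
    rw [← Real.sqrt_sq hη₀.le, ← Real.sqrt_mul (by positivity)]
    rw [show η₀ ^ 2 * (C / D) = C * η₀ ^ 2 / D by ring]
    calc Real.sqrt (C * η₀ ^ 2 / D) ≤ Real.sqrt ((η t) ^ 2) := Real.sqrt_le_sqrt key
      _ = η t := Real.sqrt_sq hηt.le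
  exact ⟨⟨ha, hη't⟩, hlb, hub⟩
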